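/- Let f : ℂ → ℂ be an entire function such that |f(z) - 2| < 1/2 for all z ∈ E_0. Then there exists a point z_0 with |z_0 - 2| < 1/2 such that f(z_0) = z_0, |f'(z_0)| < 1 (so z_0 is an attracting fixed point of f), and for every z ∈ E_0 the sequence of iterates f^n(z) converges to z_0 as n → ∞. -/

import Mathlib

open Complex Metric

noncomputable section

/-- `Gset k` is the set `G_k` for `k ≥ 1`. -/
def Gset (k : ℕ) : Set ℂ :=
  {z | ‖z - (4*(k:ℂ)+2)‖ ≤ 1} ∪
  {z | z.re = 4*(k:ℝ)+2 ∧ 1 ≤ z.im} ∪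
  {z | z.re = 4*(k:ℝ)+2 ∧ z.im ≤ -1}

/-- `Bset k` is the set `B_k` for `k ≥ 1`. -/
def Bset (k : ℕ) : Set ℂ :=
  {z | ‖z + (4*(k:ℂ)+2)‖ ≤ 1} ∪
  {z | z.re = -(4*(k:ℝ)+2) ∧ 1 ≤ z.im} ∪
  {z | z.re = -(4*(k:ℝ)+2) ∧ z.im ≤ -1}

/-- `Lset k` is the vertical line `Re z = 4k`. -/
def Lset (k : ℕ) : Set ℂ := {z | z.re = 4*(k:ℝ)}

/-- `Mset k` is the vertical line `Re z = -4k`. -/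
def Mset (k : ℕ) : Set ℂ := {z | z.re = -(4*(k:ℝ))}

/-- `G0` is the closed disk `|z - 2| ≤ 1`. -/
def G0 : Set ℂ := {z | ‖z - 2‖ ≤ 1}

/-- `E0 = G_0 ∪ ⋃_{k ≥ 1} (L_k ∪ M_k)`. -/
def E0 : Set ℂ := G0 ∪ ⋃ k ∈ Set.Ici 1, (Lset k ∪ Mset k)

/-- Condition (F). -/
def CondF (f : ℂ → ℂ) : Prop :=
  (∀ z ∈ E0, ‖f z - 2‖ < 1/2) ∧
  (∀ k : ℕ, 1 ≤ k → ∀ z ∈ Gset k, ‖f z + 6‖ < 1/2) ∧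
  (∀ k : ℕ, 1 ≤ k → ∀ z ∈ Bset k, ‖f z + (4*(k:ℂ)+6)‖ < 1/2)

/-- Condition (G). -/
def CondG (g : ℂ → ℂ) : Prop :=
  (∀ z ∈ E0, ‖g z - 2‖ < 1/2) ∧
  (∀ z ∈ Gset 1, ‖g z + 6‖ < 1/2) ∧
  (∀ k : ℕ, 2 ≤ k → ∀ z ∈ Gset k, ‖g z - (4*(k:ℂ)-2)‖ < 1/2) ∧
  (∀ k : ℕ, 1 ≤ k → ∀ z ∈ Bset k, ‖g z + (4*(k:ℂ)+6)‖ < 1/2)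

/-- Condition (H). -/
def CondH (h : ℂ → ℂ) : Prop :=
  (∀ z ∈ E0, ‖h z - 2‖ < 1/2) ∧
  (∀ z ∈ Gset 1, ‖h z + 10‖ < 1/2) ∧
  (∀ z ∈ Gset 2, ‖h z + 6‖ < 1/2) ∧
  (∀ k : ℕ, 3 ≤ k → ∀ z ∈ Gset k, ‖h z - (4*(k:ℂ)-6)‖ < 1/2) ∧
  (∀ k : ℕ, 1 ≤ k → ∀ z ∈ Bset k, ‖h z + (4*(k:ℂ)+6)‖ < 1/2)

theorem attracting_fixed_point_of_contraction_on_E0 (f : ℂ → ℂ)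
    (hf : Differentiable ℂ f)
    (hE : ∀ z ∈ E0, ‖f z - 2‖ < 1/2) :
    ∃ z₀ : ℂ, ‖z₀ - 2‖ < 1/2 ∧ f z₀ = z₀ ∧
      ‖deriv f z₀‖ < 1 ∧
      ∀ z ∈ E0, Filter.Tendsto (fun n : ℕ => f^[n] z) Filter.atTop (nhds z₀) := by
  classical
  have hG0E : closedBall (2:ℂ) 1 ⊆ E0 := by
    intro z hz
    exact Or.inl (by simpa [G0, Complex.dist_eq] using hz)
  -- maximum of |f z - 2| on the closed unit ball around 2
  obtain ⟨x₀, hx₀, hmax'⟩ := (isCompact_closedBall (2:ℂ) 1).exists_isMaxOn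
    ⟨2, by simp⟩
    ((continuous_norm.comp (hf.continuous.sub continuous_const)).continuousOn)
  have hmax : ∀ w ∈ closedBall (2:ℂ) 1, ‖f w - 2‖ ≤ ‖f x₀ - 2‖ :=
    fun w hw => hmax' hw
  set M : ℝ := ‖f x₀ - 2‖ with hMdef
  have hM0 : 0 ≤ M := norm_nonneg _
  have hM : M < 1/2 := hE x₀ (hG0E hx₀)
  -- Cauchy estimate for the derivative on the small ball
  have hderiv : ∀ z ∈ closedBall (2:ℂ) (1/2), ‖deriv f z‖ ≤ 2*M := by
    intro z hz
    have h1 : ‖deriv (fun w => f w - 2) z‖ ≤ M / (1/2) := by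
      apply Complex.norm_deriv_le_of_forall_mem_sphere_norm_le (by norm_num : (0:ℝ) < 1/2)
        ((hf.sub_const 2).diffContOnCl)
      intro w hw
      have hw' : dist w z = 1/2 := mem_sphere.mp hw
      have : w ∈ closedBall (2:ℂ) 1 := by
        have h2 : dist w 2 ≤ dist w z + dist z 2 := dist_triangle _ _ _
        have hz' : dist z 2 ≤ 1/2 := mem_closedBall.mp hz
        have : dist w 2 ≤ 1 := by rw [hw'] at h2; linarith
        exact mem_closedBall.mpr this
      exact hmax w this
    rw [deriv_sub_const] at h1
    linarith [h1]
  set s : Set ℂ := closedBall (2:ℂ) (1/2) with hs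
  have hsE : s ⊆ E0 := fun z hz => hG0E (closedBall_subset_closedBall (by norm_num) hz)
  have hmaps : Set.MapsTo f s s := by
    intro z hz
    have := hE z (hsE hz)
    exact mem_closedBall.mpr (by rw [Complex.dist_eq]; exact this.le)
  set K : NNReal := Real.toNNReal (2*M) with hK
  have hKcoe : (K : ℝ) = 2*M := Real.coe_toNNReal _ (by linarith)
  have hK1 : K < 1 := by
    rw [← NNReal.coe_lt_coe, hKcoe, NNReal.coe_one]; linarith
  have hlip : LipschitzOnWith K f s := by
    apply (convex_closedBall (2:ℂ) (1/2)).lipschitzOnWith_of_nnnorm_fderiv_le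
      (fun x _ => hf x)
    intro x hx
    rw [← NNReal.coe_le_coe, coe_nnnorm, hKcoe, ← norm_deriv_eq_norm_fderiv]
    exact hderiv x hx
  have hcontr : ContractingWith K (hmaps.restrict f s s) :=
    ⟨hK1, hmaps.lipschitzOnWith_iff_restrict.mp hlip⟩
  have hsc : IsComplete s := isClosed_closedBall.isComplete
  have h2s : (2:ℂ) ∈ s := mem_closedBall_self (by norm_num)
  obtain ⟨y, hys, hfix, htend, -⟩ :=
    hcontr.exists_fixedPoint' hsc hmaps h2s (edist_ne_top _ _)
  have hyE : y ∈ E0 := hsE hys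
  have hy2 : ‖y - 2‖ < 1/2 := by
    have := hE y hyE
    rwa [hfix.eq] at this
  refine ⟨y, hy2, hfix.eq, ?_, ?_⟩
  · calc ‖deriv f y‖ ≤ 2*M := hderiv y hys
    _ < 1 := by linarith
  · intro z hz
    have hfz : f z ∈ s := by
      have := hE z hz
      exact mem_closedBall.mpr (by rw [Complex.dist_eq]; exact this.le)
    obtain ⟨y', hy's, hfix', htend', -⟩ :=
      hcontr.exists_fixedPoint' hsc hmaps hfz (edist_ne_top _ _)
    have hdist : dist y y' ≤ (K : ℝ) * dist y y' := by
      have := (lipschitzOnWith_iff_dist_le_mul.mp hlip) y hys y' hy's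
      rwa [hfix.eq, hfix'.eq] at this
    have hyy' : y = y' := by
      have h0 : dist y y' = 0 := by
        by_contra h
        have hpos : 0 < dist y y' := lt_of_le_of_ne dist_nonneg (Ne.symm h)
        nlinarith [hKcoe ▸ hdist]
      exact dist_eq_zero.mp h0
    rw [hyy']
    have htend2 : Filter.Tendsto (fun n : ℕ => f^[n+1] z) Filter.atTop (nhds y') := by
      simpa [Function.iterate_succ_apply] using htend'
    exact (Filter.tendsto_add_atTop_iff_nat 1).mp htend2
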